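/- Let f : 2^{[n]} → ℝ be supermodular with f(∅)=0 and suppose the constraints ∑_{i∈B} R_i ≥ f(B) (for all nonempty B) are feasible. Then the greedy vector R defined by R_{π(i)} = f({π(1),…,π(i)}) − f({π(1),…,π(i−1)}) for any permutation π satisfies ∑_{i∈B} R_{i} ≥ f(B) for every B ⊆ [n], with equality for each prefix set {π(1),…,π(k)}. -/

import Mathlib

open Finset

theorem greedy_vector_feasible
    (n : ℕ) (f : Finset (Fin n) → ℝ) (R : Fin n → ℝ)
    (π : Equiv.Perm (Fin n))
    (hsuper : ∀ A B : Finset (Fin n), f A + f B ≤ f (A ∪ B) + f (A ∩ B))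
    (hnorm : f ∅ = 0)
    (hfeas : ∃ R₀ : Fin n → ℝ,
      ∀ B : Finset (Fin n), B.Nonempty → f B ≤ ∑ i ∈ B, R₀ i)
    (hR : ∀ i : Fin n,
      R (π i) = f ((Finset.univ.filter (fun k => k ≤ i)).image π)
        - f ((Finset.univ.filter (fun k => k < i)).image π)) :
    (∀ B : Finset (Fin n), f B ≤ ∑ i ∈ B, R i) ∧
    (∀ k : Fin n,
      ∑ i ∈ (Finset.univ.filter (fun j => j ≤ k)).image π, R i =
        f ((Finset.univ.filter (fun j => j ≤ k)).image π)) := by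
  have hπinj : Function.Injective π := π.injective
  constructor
  · intro B
    induction B using Finset.strongInduction with
    | _ B ih =>
      rcases B.eq_empty_or_nonempty with rfl | hB
      · simp [hnorm]
      · have hT : (B.image π.symm).Nonempty := hB.image _
        set j : Fin n := (B.image π.symm).max' hT with hj
        have hjmem : j ∈ B.image π.symm := (B.image π.symm).max'_mem hT
        have hπjB : π j ∈ B := by
          obtain ⟨b, hb, hbj⟩ := Finset.mem_image.mp hjmem
          have : π j = b := by rw [← hbj]; simp
          rwa [this]
        have hjmax : ∀ b ∈ B, π.symm b ≤ j := by
          intro b hb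
          exact (B.image π.symm).le_max' _ (Finset.mem_image_of_mem _ hb)
        set Q : Finset (Fin n) := (Finset.univ.filter (fun k => k < j)).image π with hQ
        set P : Finset (Fin n) := (Finset.univ.filter (fun k => k ≤ j)).image π with hP
        have hunion : B ∪ Q = P := by
          apply Finset.Subset.antisymm
          · intro x hx
            rcases Finset.mem_union.mp hx with hx | hx
            · refine Finset.mem_image.mpr ⟨π.symm x, ?_, by simp⟩
              simp [hjmax x hx]
            · obtain ⟨k, hk, rfl⟩ := Finset.mem_image.mp hx
              refine Finset.mem_image.mpr ⟨k, ?_, rfl⟩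
              simp only [Finset.mem_filter, Finset.mem_univ, true_and] at hk ⊢
              exact le_of_lt hk
          · intro x hx
            obtain ⟨k, hk, rfl⟩ := Finset.mem_image.mp hx
            simp only [Finset.mem_filter, Finset.mem_univ, true_and] at hk
            rcases lt_or_eq_of_le hk with h | h
            · exact Finset.mem_union_right _ (Finset.mem_image.mpr ⟨k, by simp [h], rfl⟩)
            · subst h; exact Finset.mem_union_left _ hπjB
        have hinter : B ∩ Q = B.erase (π j) := by
          ext x
          simp only [Finset.mem_inter, Finset.mem_erase]
          constructor
          · rintro ⟨hxB, hxQ⟩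
            obtain ⟨k, hk, rfl⟩ := Finset.mem_image.mp hxQ
            simp only [Finset.mem_filter, Finset.mem_univ, true_and] at hk
            exact ⟨fun h => absurd (hπinj h) (ne_of_lt hk), hxB⟩
          · rintro ⟨hne, hxB⟩
            refine ⟨hxB, Finset.mem_image.mpr ⟨π.symm x, ?_, by simp⟩⟩
            simp only [Finset.mem_filter, Finset.mem_univ, true_and]
            refine lt_of_le_of_ne (hjmax x hxB) (fun h => hne ?_)
            rw [← h]; simp
        have hsup := hsuper B Q
        rw [hunion, hinter] at hsup
        have hRj : R (π j) = f P - f Q := hR j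
        have h2 := ih (B.erase (π j)) (Finset.erase_ssubset hπjB)
        have hsum : R (π j) + ∑ i ∈ B.erase (π j), R i = ∑ i ∈ B, R i :=
          Finset.add_sum_erase B R hπjB
        linarith
  · have sumlem : ∀ m : ℕ,
        ∑ j ∈ Finset.univ.filter (fun j : Fin n => (j : ℕ) ≤ m), R (π j) =
          f ((Finset.univ.filter (fun j : Fin n => (j : ℕ) ≤ m)).image π) := by
      intro m
      induction m with
      | zero =>
        rcases Nat.eq_zero_or_pos n with rfl | hpos
        · simp [hnorm]
        · set z : Fin n := ⟨0, hpos⟩ with hz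
          have e0 : Finset.univ.filter (fun j : Fin n => (j : ℕ) ≤ 0) = {z} := by
            ext x
            simp only [Finset.mem_filter, Finset.mem_univ, true_and,
              Finset.mem_singleton, Fin.ext_iff, hz]
            omega
          have e1 : Finset.univ.filter (fun k : Fin n => k ≤ z) =
              Finset.univ.filter (fun j : Fin n => (j : ℕ) ≤ 0) := by
            ext x; simp only [Finset.mem_filter, Finset.mem_univ, true_and, Fin.le_def, hz]
          have e2 : Finset.univ.filter (fun k : Fin n => k < z) = ∅ := by
            ext x; simp only [Finset.mem_filter, Finset.mem_univ, true_and, Fin.lt_def, hz,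
              Finset.notMem_empty, iff_false]; omega
          rw [e0, Finset.sum_singleton, hR z, e1, e0, e2]
          simp [hnorm]
      | succ m ihm =>
        by_cases h : m + 1 < n
        · set z : Fin n := ⟨m + 1, h⟩ with hz
          have hset : Finset.univ.filter (fun j : Fin n => (j : ℕ) ≤ m + 1) =
              insert z (Finset.univ.filter (fun j : Fin n => (j : ℕ) ≤ m)) := by
            ext x; simp [Fin.ext_iff, hz]; omega
          have hzn : z ∉ Finset.univ.filter (fun j : Fin n => (j : ℕ) ≤ m) := by
            simp [hz]
          have e1 : Finset.univ.filter (fun k : Fin n => k ≤ z) =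
              Finset.univ.filter (fun j : Fin n => (j : ℕ) ≤ m + 1) := by
            ext x; simp [Fin.le_def, hz]
          have e2 : Finset.univ.filter (fun k : Fin n => k < z) =
              Finset.univ.filter (fun j : Fin n => (j : ℕ) ≤ m) := by
            ext x; simp [Fin.lt_def, hz]
          rw [hset, Finset.sum_insert hzn, hR z, e1, e2, ihm, ← hset]
          ring
        · have hset : Finset.univ.filter (fun j : Fin n => (j : ℕ) ≤ m + 1) =
              Finset.univ.filter (fun j : Fin n => (j : ℕ) ≤ m) := by
            ext x; simp only [Finset.mem_filter, Finset.mem_univ, true_and]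
            have := x.isLt; omega
          rw [hset]; exact ihm
    intro k
    have hsetk : Finset.univ.filter (fun j : Fin n => j ≤ k) =
        Finset.univ.filter (fun j : Fin n => (j : ℕ) ≤ (k : ℕ)) := by
      ext x; simp only [Finset.mem_filter, Fin.le_def]
    rw [Finset.sum_image (fun a _ b _ h => hπinj h), hsetk]
    exact sumlem (k : ℕ)
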